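/- Let G be a simple connected graph and suppose κ_LLY(x,y) ≥ κ₀ for every edge xy of G. Then κ_LLY(x,y) ≥ κ₀ for every pair of distinct vertices x, y. -/

import Mathlib

open Filter Set

variable {V : Type*}

-- The `α`-lazy random walk distribution at vertex `x`.
open Classical in
noncomputable def lazyWalk (G : SimpleGraph V) [G.LocallyFinite] (α : ℝ) (x : V) : V → ℝ :=
  fun v => if v = x then α else if G.Adj x v then (1 - α) / (G.degree x : ℝ) else 0

/-- `A` is a coupling between the finitely supported distributions `m₁` and `m₂`. -/
def IsCoupling (m₁ m₂ : V → ℝ) (A : V → V → ℝ) : Prop :=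
  (Function.support fun p : V × V => A p.1 p.2).Finite ∧
  (∀ x y, 0 ≤ A x y ∧ A x y ≤ 1) ∧
  (∀ x, ∑ᶠ y, A x y = m₁ x) ∧
  (∀ y, ∑ᶠ x, A x y = m₂ y)

/-- The transportation (Wasserstein) distance between two distributions on `V`,
with respect to the graph distance of `G`. -/
noncomputable def transportDist (G : SimpleGraph V) (m₁ m₂ : V → ℝ) : ℝ :=
  sInf {w : ℝ | ∃ A : V → V → ℝ, IsCoupling m₁ m₂ A ∧
    w = ∑ᶠ p : V × V, A p.1 p.2 * (G.dist p.1 p.2 : ℝ)}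

/-- The `α`-Ricci curvature `κ_α(x,y)`. -/
noncomputable def alphaRicci (G : SimpleGraph V) [G.LocallyFinite] (α : ℝ) (x y : V) : ℝ :=
  1 - transportDist G (lazyWalk G α x) (lazyWalk G α y) / (G.dist x y : ℝ)

/-- `κ` is the Lin–Lu–Yau Ricci curvature of the pair `(x,y)`:
the limit of `κ_α(x,y)/(1-α)` as `α → 1⁻`. -/
def HasLLYCurv (G : SimpleGraph V) [G.LocallyFinite] (x y : V) (κ : ℝ) : Prop :=
  Tendsto (fun α : ℝ => alphaRicci G α x y / (1 - α)) (nhdsWithin 1 (Set.Iio 1)) (nhds κ)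

/-- `G` is positively curved: every edge has positive Lin–Lu–Yau Ricci curvature. -/
def PositivelyCurved (G : SimpleGraph V) [G.LocallyFinite] : Prop :=
  ∀ ⦃x y : V⦄, G.Adj x y → ∃ κ : ℝ, 0 < κ ∧ HasLLYCurv G x y κ

/-- `G` is planar: it admits a topological embedding in the plane, i.e. an injective
placement of the vertices together with arcs for the edges, where arcs are injective
continuous curves joining the endpoints, not passing through any other vertex, and
two arcs of distinct edges meet only in common endpoints. -/
def IsPlanar (G : SimpleGraph V) : Prop :=
  ∃ (f : V → ℝ × ℝ) (e : ∀ u v : V, G.Adj u v → Set.Icc (0:ℝ) 1 → ℝ × ℝ),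
    Function.Injective f ∧
    (∀ u v (h : G.Adj u v), Continuous (e u v h)) ∧
    (∀ u v (h : G.Adj u v), Function.Injective (e u v h)) ∧
    (∀ u v (h : G.Adj u v),
      e u v h ⟨0, Set.left_mem_Icc.mpr zero_le_one⟩ = f u ∧
      e u v h ⟨1, Set.right_mem_Icc.mpr zero_le_one⟩ = f v) ∧
    (∀ u v (h : G.Adj u v) (w : V), w ≠ u → w ≠ v → f w ∉ Set.range (e u v h)) ∧
    (∀ u v (h : G.Adj u v) (u' v' : V) (h' : G.Adj u' v'), ({u, v} : Set V) ≠ {u', v'} →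
      Set.range (e u v h) ∩ Set.range (e u' v' h') ⊆ (f '' {u, v}) ∩ (f '' {u', v'}))

open scoped Classical

-- helper: finsum to finset sum
lemma fsum_eq {W : Type*} {f : W → ℝ} {s : Finset W} (h : ∀ a, f a ≠ 0 → a ∈ s) :
    ∑ᶠ a, f a = ∑ a ∈ s, f a :=
  finsum_eq_sum_of_support_subset _ (fun a ha => h a ha)

/-- A finitely supported probability distribution with values in [0,1]. -/
def IsDist (m : V → ℝ) : Prop :=
  (Function.support m).Finite ∧ (∀ v, 0 ≤ m v ∧ m v ≤ 1) ∧ ∑ᶠ v, m v = 1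

section LazyWalk

variable (G : SimpleGraph V) [G.LocallyFinite] {α : ℝ} {x : V}

lemma lazyWalk_mem_support {v : V} (h : lazyWalk G α x v ≠ 0) :
    v ∈ insert x (G.neighborFinset x) := by
  unfold lazyWalk at h
  by_cases hv : v = x
  · simp [hv]
  · simp only [hv, if_false] at h
    by_cases ha : G.Adj x v
    · simp [SimpleGraph.mem_neighborFinset, ha]
    · simp [ha] at h

lemma lazyWalk_sum (h0 : 0 < G.degree x) : ∑ᶠ v, lazyWalk G α x v = 1 := by
  rw [fsum_eq (s := insert x (G.neighborFinset x)) (fun a ha => lazyWalk_mem_support G ha)]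
  rw [Finset.sum_insert (by simp [SimpleGraph.mem_neighborFinset])]
  have h1 : ∀ v ∈ G.neighborFinset x, lazyWalk G α x v = (1 - α) / (G.degree x : ℝ) := by
    intro v hv
    rw [SimpleGraph.mem_neighborFinset] at hv
    have : v ≠ x := fun h => by subst h; exact G.irrefl hv
    simp [lazyWalk, this, hv]
  rw [Finset.sum_congr rfl h1, Finset.sum_const, SimpleGraph.card_neighborFinset_eq_degree]
  have hd : (G.degree x : ℝ) ≠ 0 := Nat.cast_ne_zero.mpr h0.ne'
  have hx : lazyWalk G α x x = α := by simp [lazyWalk]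
  rw [hx, nsmul_eq_mul, mul_div_cancel₀ _ hd]
  ring

lemma lazyWalk_isDist (h0 : 0 < G.degree x) (hα0 : 0 ≤ α) (hα1 : α ≤ 1) :
    IsDist (lazyWalk G α x) := by
  refine ⟨Set.Finite.subset (Finset.finite_toSet _) (fun v hv => lazyWalk_mem_support G hv),
    fun v => ?_, lazyWalk_sum G h0⟩
  have hd : (1:ℝ) ≤ (G.degree x : ℝ) := by exact_mod_cast h0
  unfold lazyWalk
  by_cases hv : v = x
  · simp [hv, hα0, hα1]
  · simp only [hv, if_false]
    by_cases ha : G.Adj x v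
    · simp only [ha, if_true]
      constructor
      · apply div_nonneg (by linarith) (by linarith)
      · rw [div_le_one (by linarith)]; linarith
    · simp [ha]

/-- Moment lemma: weighted sum with weight vanishing at `x` and `1` on neighbors. -/
lemma lazyWalk_moment (h0 : 0 < G.degree x) {w : V → ℝ} (hwx : w x = 0)
    (hw : ∀ v, G.Adj x v → w v = 1) :
    ∑ᶠ v, lazyWalk G α x v * w v = 1 - α := by
  have hsub : ∀ a, lazyWalk G α x a * w a ≠ 0 → a ∈ insert x (G.neighborFinset x) := by
    intro a ha
    exact lazyWalk_mem_support G (fun h => ha (by rw [h, zero_mul]))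
  rw [fsum_eq hsub, Finset.sum_insert (by simp [SimpleGraph.mem_neighborFinset])]
  have h1 : ∀ v ∈ G.neighborFinset x,
      lazyWalk G α x v * w v = (1 - α) / (G.degree x : ℝ) := by
    intro v hv
    rw [SimpleGraph.mem_neighborFinset] at hv
    have hne : v ≠ x := fun h => by subst h; exact G.irrefl hv
    simp [lazyWalk, hne, hv, hw v hv]
  rw [Finset.sum_congr rfl h1, Finset.sum_const, SimpleGraph.card_neighborFinset_eq_degree]
  have hd : (G.degree x : ℝ) ≠ 0 := Nat.cast_ne_zero.mpr h0.ne'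
  rw [hwx, mul_zero, nsmul_eq_mul, mul_div_cancel₀ _ hd, zero_add]

end LazyWalk

section Couplings
variable {m₁ m₂ : V → ℝ} {A : V → V → ℝ}

/-- Vertices appearing as first coordinate in the support of `A`. -/
noncomputable def cpFst (hA : IsCoupling m₁ m₂ A) : Finset V := hA.1.toFinset.image Prod.fst
noncomputable def cpSnd (hA : IsCoupling m₁ m₂ A) : Finset V := hA.1.toFinset.image Prod.snd

lemma mem_cpFst (hA : IsCoupling m₁ m₂ A) {u v : V} (h : A u v ≠ 0) : u ∈ cpFst hA := by
  exact Finset.mem_image.mpr ⟨(u, v), by simpa [Set.Finite.mem_toFinset] using h, rfl⟩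

lemma mem_cpSnd (hA : IsCoupling m₁ m₂ A) {u v : V} (h : A u v ≠ 0) : v ∈ cpSnd hA := by
  exact Finset.mem_image.mpr ⟨(u, v), by simpa [Set.Finite.mem_toFinset] using h, rfl⟩

lemma row_sum (hA : IsCoupling m₁ m₂ A) {t : Finset V} (ht : cpSnd hA ⊆ t) (u : V) :
    ∑ v ∈ t, A u v = m₁ u := by
  rw [← hA.2.2.1 u]
  exact (fsum_eq (fun v hv => ht (mem_cpSnd hA hv))).symm

lemma col_sum (hA : IsCoupling m₁ m₂ A) {s : Finset V} (hs : cpFst hA ⊆ s) (v : V) :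
    ∑ u ∈ s, A u v = m₂ v := by
  rw [← hA.2.2.2 v]
  exact (fsum_eq (fun u hu => hs (mem_cpFst hA hu))).symm

lemma m₁_ne_zero_mem (hA : IsCoupling m₁ m₂ A) {u : V} (h : m₁ u ≠ 0) : u ∈ cpFst hA := by
  by_contra hu
  apply h
  rw [← hA.2.2.1 u]
  exact finsum_eq_zero_of_forall_eq_zero fun v => by
    by_contra hv; exact hu (mem_cpFst hA hv)

lemma m₂_ne_zero_mem (hA : IsCoupling m₁ m₂ A) {v : V} (h : m₂ v ≠ 0) : v ∈ cpSnd hA := by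
  by_contra hv
  apply h
  rw [← hA.2.2.2 v]
  exact finsum_eq_zero_of_forall_eq_zero fun u => by
    by_contra hu; exact hv (mem_cpSnd hA hu)

/-- Generic conversion of a product finsum to a double finset sum. -/
lemma cost_eq_double_sum (hA : IsCoupling m₁ m₂ A) {g : V × V → ℝ}
    (hg : ∀ p, g p ≠ 0 → A p.1 p.2 ≠ 0) {s t : Finset V}
    (hs : cpFst hA ⊆ s) (ht : cpSnd hA ⊆ t) :
    ∑ᶠ p : V × V, g p = ∑ u ∈ s, ∑ v ∈ t, g (u, v) := by
  rw [fsum_eq (s := s ×ˢ t) (fun p hp => Finset.mem_product.mpr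
    ⟨hs (mem_cpFst hA (hg p hp)), ht (mem_cpSnd hA (hg p hp))⟩), Finset.sum_product]

lemma total_mass (hA : IsCoupling m₁ m₂ A) (hm : ∑ᶠ v, m₁ v = 1) :
    ∑ u ∈ cpFst hA, ∑ v ∈ cpSnd hA, A u v = 1 := by
  calc ∑ u ∈ cpFst hA, ∑ v ∈ cpSnd hA, A u v
      = ∑ u ∈ cpFst hA, m₁ u := Finset.sum_congr rfl fun u _ => row_sum hA (le_refl _) u
    _ = ∑ᶠ u, m₁ u := (fsum_eq (fun u hu => m₁_ne_zero_mem hA hu)).symm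
    _ = 1 := hm

/-- The product coupling. -/
lemma prod_isCoupling (h1 : IsDist m₁) (h2 : IsDist m₂) :
    IsCoupling m₁ m₂ (fun u v => m₁ u * m₂ v) := by
  refine ⟨?_, fun u v => ⟨mul_nonneg (h1.2.1 u).1 (h2.2.1 v).1,
      mul_le_one₀ (h1.2.1 u).2 (h2.2.1 v).1 (h2.2.1 v).2⟩, fun u => ?_, fun v => ?_⟩
  · apply Set.Finite.subset (h1.1.prod h2.1)
    intro p hp
    rw [Function.mem_support] at hp
    exact ⟨fun h => hp (by show m₁ p.1 * m₂ p.2 = 0; rw [h, zero_mul]),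
           fun h => hp (by show m₁ p.1 * m₂ p.2 = 0; rw [h, mul_zero])⟩
  · rw [fsum_eq (s := h2.1.toFinset) (fun v hv => by
      rw [Set.Finite.mem_toFinset]; exact fun h => hv (by simp [h]))]
    rw [← Finset.mul_sum, ← fsum_eq (s := h2.1.toFinset) (fun v hv => by
      rwa [Set.Finite.mem_toFinset]), h2.2.2, mul_one]
  · rw [fsum_eq (s := h1.1.toFinset) (fun u hu => by
      rw [Set.Finite.mem_toFinset]; exact fun h => hu (by simp [h]))]
    rw [← Finset.sum_mul, ← fsum_eq (s := h1.1.toFinset) (fun u hu => by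
      rwa [Set.Finite.mem_toFinset]), h1.2.2, one_mul]

/-- The set of transport costs. -/
def costSet (G : SimpleGraph V) (m₁ m₂ : V → ℝ) : Set ℝ :=
  {w : ℝ | ∃ A : V → V → ℝ, IsCoupling m₁ m₂ A ∧
    w = ∑ᶠ p : V × V, A p.1 p.2 * (G.dist p.1 p.2 : ℝ)}

lemma transportDist_eq (G : SimpleGraph V) (m₁ m₂ : V → ℝ) :
    transportDist G m₁ m₂ = sInf (costSet G m₁ m₂) := rfl

lemma costSet_nonneg (G : SimpleGraph V) {m₁ m₂ : V → ℝ} {w : ℝ}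
    (hw : w ∈ costSet G m₁ m₂) : 0 ≤ w := by
  obtain ⟨A, hA, rfl⟩ := hw
  exact finsum_nonneg fun p => mul_nonneg (hA.2.1 p.1 p.2).1 (Nat.cast_nonneg _)

lemma costSet_bddBelow (G : SimpleGraph V) (m₁ m₂ : V → ℝ) :
    BddBelow (costSet G m₁ m₂) := ⟨0, fun w hw => costSet_nonneg G hw⟩

lemma costSet_nonempty (G : SimpleGraph V) {m₁ m₂ : V → ℝ}
    (h1 : IsDist m₁) (h2 : IsDist m₂) : (costSet G m₁ m₂).Nonempty :=
  ⟨_, fun u v => m₁ u * m₂ v, prod_isCoupling h1 h2, rfl⟩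

lemma transportDist_nonneg (G : SimpleGraph V) {m₁ m₂ : V → ℝ}
    (h1 : IsDist m₁) (h2 : IsDist m₂) : 0 ≤ transportDist G m₁ m₂ :=
  le_csInf (costSet_nonempty G h1 h2) fun w hw => costSet_nonneg G hw

lemma transportDist_le (G : SimpleGraph V) {m₁ m₂ : V → ℝ} {w : ℝ}
    (hw : w ∈ costSet G m₁ m₂) : transportDist G m₁ m₂ ≤ w :=
  csInf_le (costSet_bddBelow G m₁ m₂) hw

lemma exists_coupling_lt (G : SimpleGraph V) {m₁ m₂ : V → ℝ}
    (h1 : IsDist m₁) (h2 : IsDist m₂) {ε : ℝ} (hε : 0 < ε) :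
    ∃ A : V → V → ℝ, IsCoupling m₁ m₂ A ∧
      ∑ᶠ p : V × V, A p.1 p.2 * (G.dist p.1 p.2 : ℝ) < transportDist G m₁ m₂ + ε := by
  obtain ⟨w, hw, hlt⟩ := Real.lt_sInf_add_pos (costSet_nonempty G h1 h2) hε
  obtain ⟨A, hA, rfl⟩ := hw
  exact ⟨A, hA, hlt⟩

end Couplings

section Bounds
variable {G : SimpleGraph V} [G.LocallyFinite]

lemma row_support_finite {m₁ m₂ : V → ℝ} {A : V → V → ℝ} (hA : IsCoupling m₁ m₂ A) (u : V) :
    (Function.support fun v => A u v).Finite :=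
  Set.Finite.subset (cpSnd hA).finite_toSet (fun v hv => mem_cpSnd hA hv)

lemma col_support_finite {m₁ m₂ : V → ℝ} {A : V → V → ℝ} (hA : IsCoupling m₁ m₂ A) (v : V) :
    (Function.support fun u => A u v).Finite :=
  Set.Finite.subset (cpFst hA).finite_toSet (fun u hu => mem_cpFst hA hu)

lemma cost_ge (hconn : G.Connected) {α : ℝ} {x y : V}
    (hx : 0 < G.degree x) (hy : 0 < G.degree y)
    {A : V → V → ℝ} (hA : IsCoupling (lazyWalk G α x) (lazyWalk G α y) A) :
    (G.dist x y : ℝ) - 2 * (1 - α) ≤ ∑ᶠ p : V × V, A p.1 p.2 * (G.dist p.1 p.2 : ℝ) := by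
  set s := cpFst hA with hs
  set t := cpSnd hA with ht
  rw [cost_eq_double_sum hA (g := fun p => A p.1 p.2 * (G.dist p.1 p.2 : ℝ))
    (fun p hp h0 => hp (by show A p.1 p.2 * _ = 0; rw [h0, zero_mul])) (le_refl s) (le_refl t)]
  have step1 : ∑ u ∈ s, ∑ v ∈ t, A u v * ((G.dist x y : ℝ) - (G.dist x u : ℝ) - (G.dist v y : ℝ))
      ≤ ∑ u ∈ s, ∑ v ∈ t, A u v * (G.dist u v : ℝ) := by
    apply Finset.sum_le_sum; intro u _
    apply Finset.sum_le_sum; intro v _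
    apply mul_le_mul_of_nonneg_left _ (hA.2.1 u v).1
    have h1 : G.dist x y ≤ G.dist x u + G.dist u v + G.dist v y :=
      le_trans (hconn.dist_triangle (v := u)) (by
        have := hconn.dist_triangle (u := u) (v := v) (w := y); omega)
    have := (Nat.cast_le (α := ℝ)).mpr h1
    push_cast at this ⊢
    linarith
  refine le_trans (le_of_eq ?_) step1
  have expand : ∀ u ∈ s, ∑ v ∈ t, A u v * ((G.dist x y : ℝ) - (G.dist x u : ℝ) - (G.dist v y : ℝ))
      = (lazyWalk G α x u) * (G.dist x y : ℝ) - (lazyWalk G α x u) * (G.dist x u : ℝ)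
        - ∑ v ∈ t, A u v * (G.dist v y : ℝ) := by
    intro u _
    have : ∀ v ∈ t, A u v * ((G.dist x y : ℝ) - (G.dist x u : ℝ) - (G.dist v y : ℝ))
        = A u v * (G.dist x y : ℝ) - A u v * (G.dist x u : ℝ) - A u v * (G.dist v y : ℝ) := by
      intro v _; ring
    rw [Finset.sum_congr rfl this, Finset.sum_sub_distrib, Finset.sum_sub_distrib,
      ← Finset.sum_mul, ← Finset.sum_mul, row_sum hA (le_refl t) u]
  rw [Finset.sum_congr rfl expand, Finset.sum_sub_distrib, Finset.sum_sub_distrib]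
  have hm1 : ∀ u, lazyWalk G α x u ≠ 0 → u ∈ s := fun u hu => m₁_ne_zero_mem hA hu
  have e1 : ∑ u ∈ s, lazyWalk G α x u * (G.dist x y : ℝ) = (G.dist x y : ℝ) := by
    rw [← Finset.sum_mul, ← fsum_eq hm1, lazyWalk_sum G hx, one_mul]
  have e2 : ∑ u ∈ s, lazyWalk G α x u * (G.dist x u : ℝ) = 1 - α := by
    rw [← fsum_eq (f := fun u => lazyWalk G α x u * (G.dist x u : ℝ))
      (fun u hu => hm1 u (fun h => hu (by show lazyWalk G α x u * _ = 0; rw [h, zero_mul])))]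
    exact lazyWalk_moment G hx (by simp) (fun v hv => by
      rw [Nat.cast_eq_one, SimpleGraph.dist_eq_one_iff_adj]; exact hv)
  have e3 : ∑ u ∈ s, ∑ v ∈ t, A u v * (G.dist v y : ℝ) = 1 - α := by
    rw [Finset.sum_comm]
    have : ∀ v ∈ t, ∑ u ∈ s, A u v * (G.dist v y : ℝ)
        = lazyWalk G α y v * (G.dist v y : ℝ) := by
      intro v _
      rw [← Finset.sum_mul, col_sum hA (le_refl s) v]
    rw [Finset.sum_congr rfl this,
      ← fsum_eq (f := fun v => lazyWalk G α y v * (G.dist v y : ℝ))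
      (fun v hv => m₂_ne_zero_mem hA (fun h => hv (by show lazyWalk G α y v * _ = 0; rw [h, zero_mul])))]
    exact lazyWalk_moment G hy (by simp) (fun v hv => by
      rw [Nat.cast_eq_one, SimpleGraph.dist_comm, SimpleGraph.dist_eq_one_iff_adj]
      exact hv)
  rw [e1, e2, e3]; ring

lemma W_ge (hconn : G.Connected) {α : ℝ} {x y : V}
    (hx : 0 < G.degree x) (hy : 0 < G.degree y) (hα0 : 0 ≤ α) (hα1 : α ≤ 1) :
    (G.dist x y : ℝ) - 2 * (1 - α) ≤ transportDist G (lazyWalk G α x) (lazyWalk G α y) :=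
  le_csInf (costSet_nonempty G (lazyWalk_isDist G hx hα0 hα1) (lazyWalk_isDist G hy hα0 hα1))
    (fun w hw => by obtain ⟨A, hA, rfl⟩ := hw; exact cost_ge hconn hx hy hA)

/-- interpolation: the key convexity estimate for transport distance. -/
lemma W_interp {α α' : ℝ} {x y : V}
    (hx : 0 < G.degree x) (hy : 0 < G.degree y)
    (hα0 : 0 ≤ α) (hαα : α ≤ α') (hα1 : α' < 1) :
    transportDist G (lazyWalk G α' x) (lazyWalk G α' y) ≤
      (1 - (1 - α') / (1 - α)) * (G.dist x y : ℝ) +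
      ((1 - α') / (1 - α)) * transportDist G (lazyWalk G α x) (lazyWalk G α y) := by
  set c : ℝ := (1 - α') / (1 - α) with hc
  have hα1' : α < 1 := lt_of_le_of_lt hαα hα1
  have h1α : (0:ℝ) < 1 - α := by linarith
  have hcpos : 0 < c := div_pos (by linarith) h1α
  have hc1 : c ≤ 1 := by rw [hc, div_le_one h1α]; linarith
  have hcmul : c * (1 - α) = 1 - α' := div_mul_cancel₀ _ h1α.ne'
  -- pointwise identity
  have keyid : ∀ (z v : V), (1 - c) * (if v = z then (1:ℝ) else 0) + c * lazyWalk G α z v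
      = lazyWalk G α' z v := by
    intro z v
    unfold lazyWalk
    by_cases hv : v = z
    · rw [if_pos hv, if_pos hv, if_pos hv, mul_one]
      linear_combination -hcmul
    · rw [if_neg hv, if_neg hv, if_neg hv, mul_zero, zero_add]
      by_cases ha : G.Adj z v
      · rw [if_pos ha, if_pos ha, ← mul_div_assoc, hcmul]
      · rw [if_neg ha, if_neg ha, mul_zero]
  refine le_of_forall_pos_le_add fun ε hε => ?_
  obtain ⟨A, hA, hcost⟩ := exists_coupling_lt G
    (lazyWalk_isDist G hx hα0 (le_of_lt hα1')) (lazyWalk_isDist G hy hα0 (le_of_lt hα1'))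
    (show (0:ℝ) < ε / c from div_pos hε hcpos)
  set C : V → V → ℝ := fun u v => (1 - c) * (if u = x ∧ v = y then 1 else 0) + c * A u v with hC
  have hCcoupling : IsCoupling (lazyWalk G α' x) (lazyWalk G α' y) C := by
    refine ⟨?_, fun u v => ?_, fun u => ?_, fun v => ?_⟩
    · apply Set.Finite.subset (hA.1.union (Set.finite_singleton (x, y)))
      intro p hp
      rw [Function.mem_support] at hp
      by_cases h1 : A p.1 p.2 = 0
      · right
        by_contra h2
        apply hp
        have : ¬(p.1 = x ∧ p.2 = y) := fun ⟨e1, e2⟩ => h2 (by simp [Prod.ext_iff, e1, e2])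
        show (1 - c) * (if p.1 = x ∧ p.2 = y then (1:ℝ) else 0) + c * A p.1 p.2 = 0
        rw [if_neg this, h1]; ring
      · exact Or.inl h1
    · constructor
      · apply add_nonneg (mul_nonneg (by linarith) (by positivity)) (mul_nonneg hcpos.le (hA.2.1 u v).1)
      · calc (1 - c) * (if u = x ∧ v = y then (1:ℝ) else 0) + c * A u v
            ≤ (1 - c) * 1 + c * 1 := add_le_add
              (mul_le_mul_of_nonneg_left (by split <;> norm_num) (by linarith))
              (mul_le_mul_of_nonneg_left (hA.2.1 u v).2 hcpos.le)
          _ = 1 := by ring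
    · have hsplit : ∑ᶠ v, C u v
          = (∑ᶠ v, (1 - c) * (if u = x ∧ v = y then (1:ℝ) else 0)) + ∑ᶠ v, c * A u v := by
        rw [← finsum_add_distrib]
        · apply Set.Finite.subset (Set.finite_singleton y)
          intro v hv
          rw [Function.mem_support] at hv
          by_contra h
          apply hv
          have : ¬(u = x ∧ v = y) := fun ⟨_, e⟩ => h e
          rw [if_neg this]; ring
        · apply Set.Finite.subset (row_support_finite hA u)
          intro v hv
          rw [Function.mem_support] at hv ⊢
          exact fun h => hv (by rw [h, mul_zero])
      rw [hsplit]
      have h1 : ∑ᶠ v, (1 - c) * (if u = x ∧ v = y then (1:ℝ) else 0)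
          = (1 - c) * (if u = x then 1 else 0) := by
        by_cases hu : u = x
        · rw [finsum_eq_single _ y (fun v hv => by
            rw [if_neg (fun ⟨_, e⟩ => hv e)]; ring)]
          simp [hu]
        · rw [if_neg hu]
          rw [finsum_eq_zero_of_forall_eq_zero fun v => by
            rw [if_neg (fun ⟨e, _⟩ => hu e)]; ring]
          ring
      have h2 : ∑ᶠ v, c * A u v = c * lazyWalk G α x u := by
        rw [fsum_eq (s := cpSnd hA) (fun v hv => mem_cpSnd hA (show A u v ≠ 0 from fun h => hv
          (by show c * A u v = 0; rw [h, mul_zero]))), ← Finset.mul_sum,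
          row_sum hA (le_refl _) u]
      rw [h1, h2, keyid]
    · have hsplit : ∑ᶠ u, C u v
          = (∑ᶠ u, (1 - c) * (if u = x ∧ v = y then (1:ℝ) else 0)) + ∑ᶠ u, c * A u v := by
        rw [← finsum_add_distrib]
        · apply Set.Finite.subset (Set.finite_singleton x)
          intro u hu
          rw [Function.mem_support] at hu
          by_contra h
          apply hu
          have : ¬(u = x ∧ v = y) := fun ⟨e, _⟩ => h e
          rw [if_neg this]; ring
        · apply Set.Finite.subset (col_support_finite hA v)
          intro u hu
          rw [Function.mem_support] at hu ⊢
          exact fun h => hu (by rw [h, mul_zero])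
      rw [hsplit]
      have h1 : ∑ᶠ u, (1 - c) * (if u = x ∧ v = y then (1:ℝ) else 0)
          = (1 - c) * (if v = y then 1 else 0) := by
        by_cases hv : v = y
        · rw [finsum_eq_single _ x (fun u hu => by
            rw [if_neg (fun ⟨e, _⟩ => hu e)]; ring)]
          simp [hv]
        · rw [if_neg hv]
          rw [finsum_eq_zero_of_forall_eq_zero fun u => by
            rw [if_neg (fun ⟨_, e⟩ => hv e)]; ring]
          ring
      have h2 : ∑ᶠ u, c * A u v = c * lazyWalk G α y v := by
        rw [fsum_eq (s := cpFst hA) (fun u hu => mem_cpFst hA (show A u v ≠ 0 from fun h => hu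
          (by show c * A u v = 0; rw [h, mul_zero]))), ← Finset.mul_sum,
          col_sum hA (le_refl _) v]
      rw [h1, h2, keyid]
  -- cost of C
  have hCcost : ∑ᶠ p : V × V, C p.1 p.2 * (G.dist p.1 p.2 : ℝ)
      = (1 - c) * (G.dist x y : ℝ)
        + c * ∑ᶠ p : V × V, A p.1 p.2 * (G.dist p.1 p.2 : ℝ) := by
    have hptwise : ∀ p : V × V, C p.1 p.2 * (G.dist p.1 p.2 : ℝ)
        = (1 - c) * ((if p.1 = x ∧ p.2 = y then (1:ℝ) else 0) * (G.dist p.1 p.2 : ℝ))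
          + c * (A p.1 p.2 * (G.dist p.1 p.2 : ℝ)) := by
      intro p; show ((1 - c) * _ + c * _) * _ = _; ring
    rw [finsum_congr hptwise, finsum_add_distrib]
    · congr 1
      · rw [finsum_eq_single _ (x, y) (fun p hp => by
          have : ¬(p.1 = x ∧ p.2 = y) := fun ⟨e1, e2⟩ => hp (Prod.ext e1 e2)
          rw [if_neg this]; ring)]
        simp
      · rw [fsum_eq (s := cpFst hA ×ˢ cpSnd hA) (fun p hp => by
          have hAp : A p.1 p.2 ≠ 0 := fun h => hp (by
            show c * (A p.1 p.2 * _) = 0; rw [h, zero_mul, mul_zero])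
          exact Finset.mem_product.mpr ⟨mem_cpFst hA hAp, mem_cpSnd hA hAp⟩),
          ← Finset.mul_sum,
          ← fsum_eq (s := cpFst hA ×ˢ cpSnd hA) (fun p hp => by
          have hAp : A p.1 p.2 ≠ 0 := fun h => hp (by
            show A p.1 p.2 * _ = 0; rw [h, zero_mul])
          exact Finset.mem_product.mpr ⟨mem_cpFst hA hAp, mem_cpSnd hA hAp⟩)]
    · apply Set.Finite.subset (Set.finite_singleton (x, y))
      intro p hp
      rw [Function.mem_support] at hp
      by_contra h
      apply hp
      have : ¬(p.1 = x ∧ p.2 = y) := fun ⟨e1, e2⟩ => h (Prod.ext e1 e2)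
      rw [if_neg this]; ring
    · apply Set.Finite.subset hA.1
      intro p hp
      rw [Function.mem_support] at hp ⊢
      exact fun h => hp (by rw [h, zero_mul, mul_zero])
  have hmem : ∑ᶠ p : V × V, C p.1 p.2 * (G.dist p.1 p.2 : ℝ)
      ∈ costSet G (lazyWalk G α' x) (lazyWalk G α' y) := ⟨C, hCcoupling, rfl⟩
  calc transportDist G (lazyWalk G α' x) (lazyWalk G α' y)
      ≤ ∑ᶠ p : V × V, C p.1 p.2 * (G.dist p.1 p.2 : ℝ) := transportDist_le G hmem
    _ = (1 - c) * (G.dist x y : ℝ)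
        + c * ∑ᶠ p : V × V, A p.1 p.2 * (G.dist p.1 p.2 : ℝ) := hCcost
    _ ≤ (1 - c) * (G.dist x y : ℝ)
        + c * (transportDist G (lazyWalk G α x) (lazyWalk G α y) + ε / c) := by
        have := mul_le_mul_of_nonneg_left hcost.le hcpos.le
        linarith
    _ = (1 - c) * (G.dist x y : ℝ)
        + c * transportDist G (lazyWalk G α x) (lazyWalk G α y) + ε := by
        rw [mul_add, mul_comm c (ε / c), div_mul_cancel₀ _ hcpos.ne']; ring

/-! ### Gluing couplings and the triangle inequality -/

lemma le_col_sum {m₁ m₂ : V → ℝ} {A : V → V → ℝ} (hA : IsCoupling m₁ m₂ A) (u v : V) :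
    A u v ≤ m₂ v := by
  rw [← col_sum hA (le_refl _) v]
  by_cases h : A u v = 0
  · rw [h]; exact Finset.sum_nonneg fun i _ => (hA.2.1 i v).1
  · exact Finset.single_le_sum (fun i _ => (hA.2.1 i v).1) (mem_cpFst hA h)

lemma le_row_sum {m₁ m₂ : V → ℝ} {A : V → V → ℝ} (hA : IsCoupling m₁ m₂ A) (u v : V) :
    A u v ≤ m₁ u := by
  rw [← row_sum hA (le_refl _) u]
  by_cases h : A u v = 0
  · rw [h]; exact Finset.sum_nonneg fun i _ => (hA.2.1 u i).1
  · exact Finset.single_le_sum (fun i _ => (hA.2.1 u i).1) (mem_cpSnd hA h)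

lemma marg_nonneg {m₁ m₂ : V → ℝ} {A : V → V → ℝ} (hA : IsCoupling m₁ m₂ A) (v : V) :
    0 ≤ m₂ v := by
  rw [← col_sum hA (le_refl _) v]
  exact Finset.sum_nonneg fun i _ => (hA.2.1 i v).1

lemma glue (hconn : G.Connected) {m₁ m₂ m₃ : V → ℝ} {A B : V → V → ℝ}
    (hA : IsCoupling m₁ m₂ A) (hB : IsCoupling m₂ m₃ B) (hm₁ : ∀ w, m₁ w ≤ 1) :
    ∃ C : V → V → ℝ, IsCoupling m₁ m₃ C ∧
      ∑ᶠ p : V × V, C p.1 p.2 * (G.dist p.1 p.2 : ℝ) ≤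
      (∑ᶠ p : V × V, A p.1 p.2 * (G.dist p.1 p.2 : ℝ)) +
      ∑ᶠ p : V × V, B p.1 p.2 * (G.dist p.1 p.2 : ℝ) := by
  classical
  set s : Finset V := cpFst hA with hsdef
  set t : Finset V := cpSnd hA ∪ cpFst hB with htdef
  set u : Finset V := cpSnd hB with hudef
  have hts : cpSnd hA ⊆ t := Finset.subset_union_left
  have htB : cpFst hB ⊆ t := Finset.subset_union_right
  set g : V → V → V → ℝ := fun x y z => if m₂ y = 0 then 0 else A x y * B y z / m₂ y with hgdef
  have hgval : ∀ x y z, g x y z = if m₂ y = 0 then 0 else A x y * B y z / m₂ y := fun _ _ _ => rfl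
  have hm₂nn : ∀ y, 0 ≤ m₂ y := marg_nonneg hA
  have hAz : ∀ x y, m₂ y = 0 → A x y = 0 := fun x y h =>
    le_antisymm (h ▸ le_col_sum hA x y) (hA.2.1 x y).1
  have hBz : ∀ y z, m₂ y = 0 → B y z = 0 := fun y z h =>
    le_antisymm (h ▸ le_row_sum hB y z) (hB.2.1 y z).1
  have hgnn : ∀ x y z, 0 ≤ g x y z := by
    intro x y z
    rw [hgval]
    split
    · exact le_refl 0
    · exact div_nonneg (mul_nonneg (hA.2.1 x y).1 (hB.2.1 y z).1) (hm₂nn y)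
  have hgA : ∀ x y z, g x y z ≤ A x y := by
    intro x y z
    rw [hgval]
    split
    · exact (hA.2.1 x y).1
    · next h =>
      have hpos : 0 < m₂ y := lt_of_le_of_ne (hm₂nn y) (Ne.symm h)
      rw [div_le_iff₀ hpos]
      exact mul_le_mul_of_nonneg_left (le_row_sum hB y z) (hA.2.1 x y).1
  have hsupp : ∀ x y z, g x y z ≠ 0 → A x y ≠ 0 ∧ B y z ≠ 0 := by
    intro x y z h
    by_contra hc
    push_neg at hc
    apply h
    rw [hgval]
    split
    · rfl
    · by_cases h1 : A x y = 0
      · rw [h1, zero_mul, zero_div]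
      · rw [hc h1, mul_zero, zero_div]
  have rowg : ∀ x y, ∑ z ∈ u, g x y z = A x y := by
    intro x y
    by_cases h : m₂ y = 0
    · rw [hAz x y h]
      exact Finset.sum_eq_zero fun z _ => by rw [hgval, if_pos h]
    · have heq : ∀ z ∈ u, g x y z = (A x y / m₂ y) * B y z := by
        intro z _
        rw [hgval, if_neg h]; ring
      rw [Finset.sum_congr rfl heq, ← Finset.mul_sum, row_sum hB (le_refl _) y,
        div_mul_cancel₀ _ h]
  have colg : ∀ y z, ∑ x ∈ s, g x y z = B y z := by
    intro y z
    by_cases h : m₂ y = 0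
    · rw [hBz y z h]
      exact Finset.sum_eq_zero fun x _ => by rw [hgval, if_pos h]
    · have heq : ∀ x ∈ s, g x y z = (B y z / m₂ y) * A x y := by
        intro x _
        rw [hgval, if_neg h]; ring
      rw [Finset.sum_congr rfl heq, ← Finset.mul_sum, col_sum hA (le_refl _) y,
        div_mul_cancel₀ _ h]
  set C : V → V → ℝ := fun x z => ∑ y ∈ t, g x y z with hCdef
  have hCval : ∀ x z, C x z = ∑ y ∈ t, g x y z := fun _ _ => rfl
  -- support lemma
  have hCsupp : ∀ x z, C x z ≠ 0 → x ∈ s ∧ z ∈ u := by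
    intro x z h
    rw [hCval] at h
    obtain ⟨y, _, hy⟩ := Finset.exists_ne_zero_of_sum_ne_zero h
    obtain ⟨h1, h2⟩ := hsupp x y z hy
    exact ⟨mem_cpFst hA h1, mem_cpSnd hB h2⟩
  have hCrow : ∀ x, ∑ z ∈ u, C x z = m₁ x := by
    intro x
    calc ∑ z ∈ u, C x z = ∑ z ∈ u, ∑ y ∈ t, g x y z := rfl
      _ = ∑ y ∈ t, ∑ z ∈ u, g x y z := Finset.sum_comm
      _ = ∑ y ∈ t, A x y := Finset.sum_congr rfl fun y _ => rowg x y
      _ = m₁ x := row_sum hA hts x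
  have hCcol : ∀ z, ∑ x ∈ s, C x z = m₃ z := by
    intro z
    calc ∑ x ∈ s, ∑ y ∈ t, g x y z
        = ∑ y ∈ t, ∑ x ∈ s, g x y z := Finset.sum_comm
      _ = ∑ y ∈ t, B y z := Finset.sum_congr rfl fun y _ => colg y z
      _ = m₃ z := col_sum hB htB z
  have hCcoupling : IsCoupling m₁ m₃ C := by
    refine ⟨?_, fun x z => ⟨Finset.sum_nonneg fun y _ => hgnn x y z, ?_⟩, fun x => ?_, fun z => ?_⟩
    · apply Set.Finite.subset (s ×ˢ u).finite_toSet
      intro p hp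
      rw [Function.mem_support] at hp
      obtain ⟨h1, h2⟩ := hCsupp p.1 p.2 hp
      exact Finset.mem_coe.mpr (Finset.mem_product.mpr ⟨h1, h2⟩)
    · calc C x z ≤ ∑ y ∈ t, A x y := Finset.sum_le_sum fun y _ => hgA x y z
        _ = m₁ x := row_sum hA hts x
        _ ≤ 1 := hm₁ x
    · rw [fsum_eq (s := u) (fun z hz => (hCsupp x z hz).2)]
      exact hCrow x
    · rw [fsum_eq (s := s) (fun x hx => (hCsupp x z hx).1)]
      exact hCcol z
  refine ⟨C, hCcoupling, ?_⟩
  have hcostC : ∑ᶠ p : V × V, C p.1 p.2 * (G.dist p.1 p.2 : ℝ)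
      = ∑ x ∈ s, ∑ z ∈ u, C x z * (G.dist x z : ℝ) := by
    rw [fsum_eq (s := s ×ˢ u) (fun p hp => by
      have : C p.1 p.2 ≠ 0 := fun h => hp (by show C p.1 p.2 * _ = 0; rw [h, zero_mul])
      exact Finset.mem_product.mpr ⟨(hCsupp p.1 p.2 this).1, (hCsupp p.1 p.2 this).2⟩),
      Finset.sum_product]
  have hcostA : ∑ᶠ p : V × V, A p.1 p.2 * (G.dist p.1 p.2 : ℝ)
      = ∑ x ∈ s, ∑ y ∈ t, A x y * (G.dist x y : ℝ) :=
    cost_eq_double_sum hA (fun p hp h0 => hp (by show A p.1 p.2 * _ = 0; rw [h0, zero_mul]))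
      (le_refl _) hts
  have hcostB : ∑ᶠ p : V × V, B p.1 p.2 * (G.dist p.1 p.2 : ℝ)
      = ∑ y ∈ t, ∑ z ∈ u, B y z * (G.dist y z : ℝ) :=
    cost_eq_double_sum hB (fun p hp h0 => hp (by show B p.1 p.2 * _ = 0; rw [h0, zero_mul]))
      htB (le_refl _)
  rw [hcostC, hcostA, hcostB]
  have step1 : ∑ x ∈ s, ∑ z ∈ u, C x z * (G.dist x z : ℝ)
      ≤ ∑ x ∈ s, ∑ z ∈ u, ∑ y ∈ t, g x y z * ((G.dist x y : ℝ) + (G.dist y z : ℝ)) := by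
    apply Finset.sum_le_sum; intro x _
    apply Finset.sum_le_sum; intro z _
    rw [hCval, Finset.sum_mul]
    apply Finset.sum_le_sum; intro y _
    apply mul_le_mul_of_nonneg_left _ (hgnn x y z)
    have h1 : G.dist x z ≤ G.dist x y + G.dist y z := hconn.dist_triangle
    exact_mod_cast h1
  refine le_trans step1 (le_of_eq ?_)
  have inner : ∀ y ∈ t, ∑ x ∈ s, ∑ z ∈ u, g x y z * ((G.dist x y : ℝ) + (G.dist y z : ℝ))
      = (∑ x ∈ s, A x y * (G.dist x y : ℝ)) + ∑ z ∈ u, B y z * (G.dist y z : ℝ) := by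
    intro y _
    have e : ∀ x ∈ s, ∑ z ∈ u, g x y z * ((G.dist x y : ℝ) + (G.dist y z : ℝ))
        = A x y * (G.dist x y : ℝ) + ∑ z ∈ u, g x y z * (G.dist y z : ℝ) := by
      intro x _
      have e2 : ∀ z ∈ u, g x y z * ((G.dist x y : ℝ) + (G.dist y z : ℝ))
          = g x y z * (G.dist x y : ℝ) + g x y z * (G.dist y z : ℝ) := fun z _ => by ring
      rw [Finset.sum_congr rfl e2, Finset.sum_add_distrib, ← Finset.sum_mul, rowg x y]
    rw [Finset.sum_congr rfl e, Finset.sum_add_distrib]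
    congr 1
    rw [Finset.sum_comm]
    refine Finset.sum_congr rfl fun z _ => ?_
    rw [← Finset.sum_mul, colg y z]
  calc ∑ x ∈ s, ∑ z ∈ u, ∑ y ∈ t, g x y z * ((G.dist x y : ℝ) + (G.dist y z : ℝ))
      = ∑ x ∈ s, ∑ y ∈ t, ∑ z ∈ u, g x y z * ((G.dist x y : ℝ) + (G.dist y z : ℝ)) :=
        Finset.sum_congr rfl fun x _ => Finset.sum_comm
    _ = ∑ y ∈ t, ∑ x ∈ s, ∑ z ∈ u, g x y z * ((G.dist x y : ℝ) + (G.dist y z : ℝ)) :=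
        Finset.sum_comm
    _ = ∑ y ∈ t, ((∑ x ∈ s, A x y * (G.dist x y : ℝ)) + ∑ z ∈ u, B y z * (G.dist y z : ℝ)) :=
        Finset.sum_congr rfl inner
    _ = (∑ x ∈ s, ∑ y ∈ t, A x y * (G.dist x y : ℝ))
        + ∑ y ∈ t, ∑ z ∈ u, B y z * (G.dist y z : ℝ) := by
        rw [Finset.sum_add_distrib]
        congr 1
        exact Finset.sum_comm

lemma W_triangle (hconn : G.Connected) {m₁ m₂ m₃ : V → ℝ}
    (h1 : IsDist m₁) (h2 : IsDist m₂) (h3 : IsDist m₃) :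
    transportDist G m₁ m₃ ≤ transportDist G m₁ m₂ + transportDist G m₂ m₃ := by
  refine le_of_forall_pos_le_add fun ε hε => ?_
  obtain ⟨A, hA, hcA⟩ := exists_coupling_lt G h1 h2 (half_pos hε)
  obtain ⟨B, hB, hcB⟩ := exists_coupling_lt G h2 h3 (half_pos hε)
  obtain ⟨C, hC, hcC⟩ := glue hconn hA hB (fun w => (h1.2.1 w).2)
  have hle := transportDist_le G (m₁ := m₁) (m₂ := m₃) ⟨C, hC, rfl⟩
  linarith

lemma W_self_le {m : V → ℝ} (h : IsDist m) : transportDist G m m ≤ 0 := by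
  classical
  set A : V → V → ℝ := fun u v => if v = u then m u else 0 with hAdef
  have hA : IsCoupling m m A := by
    refine ⟨?_, fun u v => ?_, fun u => ?_, fun v => ?_⟩
    · apply Set.Finite.subset (Set.Finite.image (fun a => (a, a)) h.1)
      intro p hp
      rw [Function.mem_support] at hp
      have hvu : p.2 = p.1 := by
        by_contra hne
        exact hp (by show (if p.2 = p.1 then _ else _) = 0; rw [if_neg hne])
      refine ⟨p.1, ?_, Prod.ext rfl hvu.symm⟩
      rw [Function.mem_support]
      intro h0
      exact hp (by show (if p.2 = p.1 then m p.1 else 0) = 0; rw [h0]; split <;> rfl)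
    · show 0 ≤ (if v = u then m u else 0) ∧ (if v = u then m u else 0) ≤ 1
      split
      · exact h.2.1 u
      · exact ⟨le_refl 0, zero_le_one⟩
    · show ∑ᶠ v, (if v = u then m u else 0) = m u
      rw [finsum_eq_single _ u (fun v hv => by rw [if_neg hv]), if_pos rfl]
    · show ∑ᶠ u, (if v = u then m u else 0) = m v
      rw [finsum_eq_single _ v (fun u hu => by rw [if_neg (fun h => hu h.symm)]), if_pos rfl]
  have hcost : ∑ᶠ p : V × V, A p.1 p.2 * (G.dist p.1 p.2 : ℝ) = 0 := by
    apply finsum_eq_zero_of_forall_eq_zero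
    intro p
    by_cases hp : p.2 = p.1
    · rw [hp]; simp
    · show (if p.2 = p.1 then m p.1 else 0) * _ = 0
      rw [if_neg hp, zero_mul]
  exact hcost ▸ transportDist_le G ⟨A, hA, hcost.symm ▸ rfl⟩

/-- Every vertex of a connected graph on a nontrivial vertex set has positive degree. -/
lemma degree_pos_of_connected [Nontrivial V] (hconn : G.Connected) (v : V) :
    0 < G.degree v := by
  obtain ⟨w, hw⟩ := exists_ne v
  obtain ⟨p⟩ := hconn v w
  have hlen : 0 < p.length := by
    by_contra h
    push_neg at h
    exact hw (p.eq_of_length_eq_zero (Nat.le_zero.mp h)).symm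
  rw [SimpleGraph.degree_pos_iff_exists_adj]
  exact ⟨p.getVert 1, by simpa [p.getVert_zero] using p.adj_getVert_succ hlen⟩

lemma W_along_walk [Nontrivial V] (hconn : G.Connected) {α : ℝ}
    (hα0 : 0 ≤ α) (hα1 : α ≤ 1) {x y : V} (p : G.Walk x y) :
    transportDist G (lazyWalk G α x) (lazyWalk G α y) ≤
      ∑ i ∈ Finset.range p.length,
        transportDist G (lazyWalk G α (p.getVert i)) (lazyWalk G α (p.getVert (i + 1))) := by
  induction p with
  | nil =>
    simpa using W_self_le (G := G) (lazyWalk_isDist G (degree_pos_of_connected hconn _) hα0 hα1)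
  | @cons a b c h q ih =>
    have hdist : ∀ z : V, IsDist (lazyWalk G α z) := fun z =>
      lazyWalk_isDist G (degree_pos_of_connected hconn z) hα0 hα1
    calc transportDist G (lazyWalk G α a) (lazyWalk G α c)
        ≤ transportDist G (lazyWalk G α a) (lazyWalk G α b)
          + transportDist G (lazyWalk G α b) (lazyWalk G α c) :=
          W_triangle hconn (hdist a) (hdist b) (hdist c)
      _ ≤ transportDist G (lazyWalk G α a) (lazyWalk G α b)
          + ∑ i ∈ Finset.range q.length,
            transportDist G (lazyWalk G α (q.getVert i)) (lazyWalk G α (q.getVert (i + 1))) := by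
          linarith [ih]
      _ = _ := by
          rw [SimpleGraph.Walk.length_cons, Finset.sum_range_succ', add_comm
            (transportDist G (lazyWalk G α a) (lazyWalk G α b))]
          congr 1
          simp [SimpleGraph.Walk.getVert_zero, SimpleGraph.Walk.getVert_cons_succ]

end Bounds

/-! ### The limit of `κ_α/(1-α)` -/

noncomputable def alphaRicci' (G : SimpleGraph V) [G.LocallyFinite] (α : ℝ) (x y : V) : ℝ :=
  1 - transportDist G (lazyWalk G α x) (lazyWalk G α y) / (G.dist x y : ℝ)

noncomputable def curvRatio (G : SimpleGraph V) [G.LocallyFinite] (x y : V) (α : ℝ) : ℝ :=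
  alphaRicci' G α x y / (1 - α)

section Limit
variable {G : SimpleGraph V} [G.LocallyFinite] [Nontrivial V]

lemma curvRatio_mono (hconn : G.Connected) {x y : V} (hxy : x ≠ y) :
    MonotoneOn (curvRatio G x y) (Set.Ioo (0:ℝ) 1) := by
  rintro α ⟨hα0, hα1⟩ α' ⟨hα'0, hα'1⟩ hαα
  set d : ℝ := (G.dist x y : ℝ) with hddef
  have hd : 0 < d := by
    rw [hddef]
    exact_mod_cast hconn.pos_dist_of_ne hxy
  set W := transportDist G (lazyWalk G α x) (lazyWalk G α y) with hW
  set W' := transportDist G (lazyWalk G α' x) (lazyWalk G α' y) with hW'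
  set c : ℝ := (1 - α') / (1 - α) with hc
  have h1α : (0:ℝ) < 1 - α := by linarith
  have h1α' : (0:ℝ) < 1 - α' := by linarith
  have hcpos : 0 < c := div_pos h1α' h1α
  have hx := degree_pos_of_connected hconn x
  have hy := degree_pos_of_connected hconn y
  have hinterp : W' ≤ (1 - c) * d + c * W := W_interp hx hy hα0.le hαα hα'1
  have hkey : c * (1 - W / d) ≤ 1 - W' / d := by
    have h2 : W' / d ≤ ((1 - c) * d + c * W) / d := (div_le_div_iff_of_pos_right hd).mpr hinterp
    have h3 : ((1 - c) * d + c * W) / d = (1 - c) + c * (W / d) := by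
      field_simp
    rw [h3] at h2
    have h4 : c * (1 - W / d) = c - c * (W / d) := by ring
    linarith
  show alphaRicci' G α x y / (1 - α) ≤ alphaRicci' G α' x y / (1 - α')
  have e1 : alphaRicci' G α x y = 1 - W / d := rfl
  have e2 : alphaRicci' G α' x y = 1 - W' / d := rfl
  rw [e1, e2]
  have e3 : (1 - W / d) / (1 - α) = (c * (1 - W / d)) / (1 - α') := by
    rw [hc]; field_simp
  rw [e3]
  exact (div_le_div_iff_of_pos_right h1α').mpr hkey

lemma curvRatio_le (hconn : G.Connected) {x y : V} (hxy : x ≠ y) {α : ℝ}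
    (hα : α ∈ Set.Ioo (0:ℝ) 1) : curvRatio G x y α ≤ 2 / (G.dist x y : ℝ) := by
  obtain ⟨hα0, hα1⟩ := hα
  set d : ℝ := (G.dist x y : ℝ) with hddef
  have hd : 0 < d := by
    rw [hddef]
    exact_mod_cast hconn.pos_dist_of_ne hxy
  set W := transportDist G (lazyWalk G α x) (lazyWalk G α y) with hW
  have hWge : d - 2 * (1 - α) ≤ W :=
    W_ge hconn (degree_pos_of_connected hconn x) (degree_pos_of_connected hconn y) hα0.le hα1.le
  have h1α : (0:ℝ) < 1 - α := by linarith
  have hk : alphaRicci' G α x y ≤ 2 * (1 - α) / d := by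
    show 1 - W / d ≤ 2 * (1 - α) / d
    have : (d - 2 * (1 - α)) / d ≤ W / d := (div_le_div_iff_of_pos_right hd).mpr hWge
    have he : (d - 2 * (1 - α)) / d = 1 - 2 * (1 - α) / d := by field_simp
    rw [he] at this
    linarith
  show alphaRicci' G α x y / (1 - α) ≤ 2 / d
  calc alphaRicci' G α x y / (1 - α) ≤ (2 * (1 - α) / d) / (1 - α) :=
        (div_le_div_iff_of_pos_right h1α).mpr hk
    _ = 2 / d := by field_simp

lemma tendsto_curvRatio (hconn : G.Connected) {x y : V} (hxy : x ≠ y) :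
    Tendsto (curvRatio G x y) (nhdsWithin 1 (Set.Iio 1))
      (nhds (sSup (curvRatio G x y '' Set.Ioo 0 1))) := by
  set L := sSup (curvRatio G x y '' Set.Ioo 0 1) with hL
  have hne : (curvRatio G x y '' Set.Ioo 0 1).Nonempty :=
    ⟨curvRatio G x y (1/2), ⟨1/2, by norm_num, rfl⟩⟩
  have hbdd : BddAbove (curvRatio G x y '' Set.Ioo 0 1) := by
    refine ⟨2 / (G.dist x y : ℝ), ?_⟩
    rintro _ ⟨α, hα, rfl⟩
    exact curvRatio_le hconn hxy hα
  rw [tendsto_order]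
  constructor
  · intro a ha
    obtain ⟨_, ⟨α₀, hα₀, rfl⟩, hlt⟩ := exists_lt_of_lt_csSup hne ha
    have hmem : Set.Ioo α₀ 1 ∈ nhdsWithin (1:ℝ) (Set.Iio 1) :=
      Ioo_mem_nhdsLT_of_mem ⟨hα₀.2, le_refl 1⟩
    filter_upwards [hmem] with α hα
    exact lt_of_lt_of_le hlt (curvRatio_mono hconn hxy hα₀
      ⟨lt_trans hα₀.1 hα.1, hα.2⟩ hα.1.le)
  · intro b hb
    have hmem : Set.Ioo (0:ℝ) 1 ∈ nhdsWithin (1:ℝ) (Set.Iio 1) :=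
      Ioo_mem_nhdsLT_of_mem ⟨zero_lt_one, le_refl 1⟩
    filter_upwards [hmem] with α hα
    exact lt_of_le_of_lt (le_csSup hbdd ⟨α, hα, rfl⟩) hb

end Limit

/-- Lemma 3: if every edge of a simple connected graph has Lin–Lu–Yau Ricci curvature
at least `κ₀`, then so does every pair of distinct vertices. -/
theorem curvature_all_pairs (G : SimpleGraph V) [G.LocallyFinite] (hconn : G.Connected)
    (κ₀ : ℝ)
    (h : ∀ x y : V, G.Adj x y → ∃ κ : ℝ, κ₀ ≤ κ ∧ HasLLYCurv G x y κ) :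
    ∀ x y : V, x ≠ y → ∃ κ : ℝ, κ₀ ≤ κ ∧ HasLLYCurv G x y κ := by
  intro x y hxy
  haveI : Nontrivial V := ⟨⟨x, y, hxy⟩⟩
  haveI : (nhdsWithin (1:ℝ) (Set.Iio 1)).NeBot := nhdsLT_neBot 1
  set L := sSup (curvRatio G x y '' Set.Ioo 0 1) with hLdef
  have hlly : HasLLYCurv G x y L := tendsto_curvRatio hconn hxy
  refine ⟨L, ?_, hlly⟩
  -- on every edge, the LLY curvature equals the sSup, hence is ≥ κ₀
  have hedge : ∀ u v : V, G.Adj u v → κ₀ ≤ sSup (curvRatio G u v '' Set.Ioo 0 1) := by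
    intro u v huv
    obtain ⟨κ, hκ₀, hκ⟩ := h u v huv
    have h2 : HasLLYCurv G u v (sSup (curvRatio G u v '' Set.Ioo 0 1)) :=
      tendsto_curvRatio hconn huv.ne
    have := tendsto_nhds_unique hκ h2
    linarith
  -- take a geodesic
  have hdpos : 0 < G.dist x y := hconn.pos_dist_of_ne hxy
  obtain ⟨p, hp⟩ := SimpleGraph.exists_walk_of_dist_ne_zero (G := G) hdpos.ne'
  set d : ℝ := (G.dist x y : ℝ) with hddef
  have hd : (0:ℝ) < d := by rw [hddef]; exact_mod_cast hdpos
  have hnd : (p.length : ℝ) = d := by rw [hddef, hp]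
  set Le : ℕ → ℝ := fun i =>
    sSup (curvRatio G (p.getVert i) (p.getVert (i+1)) '' Set.Ioo 0 1) with hLe
  have hadj : ∀ i, i < p.length → G.Adj (p.getVert i) (p.getVert (i+1)) :=
    fun i hi => p.adj_getVert_succ hi
  set gfun : ℝ → ℝ := fun α =>
    (∑ i ∈ Finset.range p.length, curvRatio G (p.getVert i) (p.getVert (i+1)) α) / d
    with hgfun
  have hgtend : Tendsto gfun (nhdsWithin 1 (Set.Iio 1))
      (nhds ((∑ i ∈ Finset.range p.length, Le i) / d)) := by
    apply Tendsto.div_const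
    exact tendsto_finset_sum _ fun i hi =>
      tendsto_curvRatio hconn (hadj i (Finset.mem_range.mp hi)).ne
  -- κ₀ ≤ limit of gfun
  have hK : κ₀ ≤ (∑ i ∈ Finset.range p.length, Le i) / d := by
    have hsum : (p.length : ℝ) * κ₀ ≤ ∑ i ∈ Finset.range p.length, Le i := by
      calc (p.length : ℝ) * κ₀ = ∑ _i ∈ Finset.range p.length, κ₀ := by
            rw [Finset.sum_const, Finset.card_range, nsmul_eq_mul]
        _ ≤ _ := Finset.sum_le_sum fun i hi =>
            hedge _ _ (hadj i (Finset.mem_range.mp hi))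
    rw [le_div_iff₀ hd]
    calc κ₀ * d = (p.length : ℝ) * κ₀ := by rw [hnd]; ring
      _ ≤ _ := hsum
  -- eventually gfun ≤ curvRatio x y
  have hev : ∀ α ∈ Set.Ioo (0:ℝ) 1, gfun α ≤ curvRatio G x y α := by
    intro α hα
    have h1α : (0:ℝ) < 1 - α := by linarith [hα.2]
    set S := ∑ i ∈ Finset.range p.length,
      transportDist G (lazyWalk G α (p.getVert i)) (lazyWalk G α (p.getVert (i+1))) with hS
    have hWle : transportDist G (lazyWalk G α x) (lazyWalk G α y) ≤ S :=
      W_along_walk hconn hα.1.le hα.2.le p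
    have hsum : ∀ i ∈ Finset.range p.length,
        curvRatio G (p.getVert i) (p.getVert (i+1)) α
        = (1 - transportDist G (lazyWalk G α (p.getVert i))
            (lazyWalk G α (p.getVert (i+1)))) / (1 - α) := by
      intro i hi
      have h1 : (G.dist (p.getVert i) (p.getVert (i+1)) : ℝ) = 1 := by
        exact_mod_cast SimpleGraph.dist_eq_one_iff_adj.mpr (hadj i (Finset.mem_range.mp hi))
      show (1 - transportDist G _ _ / (G.dist _ _ : ℝ)) / (1 - α) = _
      rw [h1, div_one]
    have e1 : gfun α = ((d - S) / (1 - α)) / d := by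
      rw [hgfun]
      show (∑ i ∈ Finset.range p.length, curvRatio G (p.getVert i) (p.getVert (i+1)) α) / d = _
      rw [Finset.sum_congr rfl hsum, ← Finset.sum_div, Finset.sum_sub_distrib,
        Finset.sum_const, Finset.card_range, nsmul_eq_mul, mul_one, hnd]
    rw [e1]
    show _ ≤ (1 - transportDist G (lazyWalk G α x) (lazyWalk G α y) / d) / (1 - α)
    have h2 : (d - S) / d ≤ 1 - transportDist G (lazyWalk G α x) (lazyWalk G α y) / d := by
      have : (d - S) / d = 1 - S / d := by field_simp
      rw [this]
      have := (div_le_div_iff_of_pos_right hd).mpr hWle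
      linarith
    calc ((d - S) / (1 - α)) / d = ((d - S) / d) / (1 - α) := by rw [div_right_comm]
      _ ≤ _ := (div_le_div_iff_of_pos_right h1α).mpr h2
  have hev' : ∀ᶠ α in nhdsWithin (1:ℝ) (Set.Iio 1), gfun α ≤ curvRatio G x y α := by
    filter_upwards [Ioo_mem_nhdsLT_of_mem (show (1:ℝ) ∈ Set.Ioc 0 1 from ⟨zero_lt_one, le_refl 1⟩)]
      with α hα using hev α hα
  have hfinal : (∑ i ∈ Finset.range p.length, Le i) / d ≤ L :=
    le_of_tendsto_of_tendsto hgtend (tendsto_curvRatio hconn hxy) hev'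
  linarith
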